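/- Let m ≥ 1 and let β_1,…,β_m be positive rational numbers with Σ_j β_j = 1. Then there exists a function ω : ℕ → ℕ^m with ω(0) = (0,…,0), such that for every k ≥ 1 there is exactly one index a_k ∈ {1,…,m} with ω_{a_k}(k) = ω_{a_k}(k-1) + 1 and ω_i(k) = ω_i(k-1) for all i ≠ a_k, and moreover for each i the sequence k ↦ ω_i(k) - β_i·k is bounded. -/

import Mathlib

namespace Stmt5Aux

/-- Partial sums of a counter-size function. -/
def T (c' : ℕ → ℕ) (j : ℕ) : ℕ := ∑ t ∈ Finset.range j, c' t

lemma T_succ (c' : ℕ → ℕ) (j : ℕ) : T c' (j + 1) = T c' j + c' j :=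
  Finset.sum_range_succ _ _

lemma T_mono (c' : ℕ → ℕ) {a b : ℕ} (h : a ≤ b) : T c' a ≤ T c' b :=
  Finset.sum_le_sum_of_subset (Finset.range_subset_range.mpr h)

lemma T_exists (c' : ℕ → ℕ) : ∀ j r, r < T c' j →
    ∃ i, i < j ∧ T c' i ≤ r ∧ r < T c' i + c' i := by
  intro j
  induction j with
  | zero => intro r hr; simp [T] at hr
  | succ j ih =>
    intro r hr
    by_cases h : r < T c' j
    · obtain ⟨i, h1, h2, h3⟩ := ih r h
      exact ⟨i, Nat.lt_succ_of_lt h1, h2, h3⟩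
    · refine ⟨j, Nat.lt_succ_self j, Nat.le_of_not_lt h, ?_⟩
      rw [T_succ] at hr; exact hr

lemma T_add_le (c' : ℕ → ℕ) {i i' : ℕ} (h : i < i') : T c' i + c' i ≤ T c' i' := by
  rw [← T_succ]; exact T_mono c' h

end Stmt5Aux

open Stmt5Aux in
/-- Given positive rationals `β_1,…,β_m` summing to 1, there is a scheduling
`ω : ℕ → ℕ^m` with `ω 0 = 0`, at each step exactly one coordinate increasing by one,
and each coordinate satisfying `ω_i(k) = β_i k + O(1)`. -/
theorem stmt5 {m : ℕ} (hm : 1 ≤ m) (β : Fin m → ℚ) (hβpos : ∀ i, 0 < β i)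
    (hβsum : ∑ i, β i = 1) :
    ∃ ω : ℕ → Fin m → ℕ,
      (∀ i, ω 0 i = 0) ∧
      (∀ k : ℕ, ∃! a : Fin m,
        ω (k + 1) a = ω k a + 1 ∧ ∀ i, i ≠ a → ω (k + 1) i = ω k i) ∧
      (∀ i, ∃ C : ℝ, ∀ k : ℕ, |(ω k i : ℝ) - (β i : ℝ) * k| ≤ C) := by
  classical
  set N : ℕ := ∏ j, (β j).den with hNdef
  have hNpos : 0 < N := Finset.prod_pos (fun j _ => (β j).pos)
  set c : Fin m → ℕ := fun i => (β i).num.toNat * (N / (β i).den) with hcdef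
  have hc : ∀ i, (c i : ℚ) = β i * N := by
    intro i
    have hdvd : (β i).den ∣ N := Finset.dvd_prod_of_mem _ (Finset.mem_univ i)
    have hnum : (0 : ℤ) < (β i).num := Rat.num_pos.mpr (hβpos i)
    have h1 : ((β i).num.toNat : ℤ) = (β i).num := Int.toNat_of_nonneg hnum.le
    have h1' : (((β i).num.toNat : ℕ) : ℚ) = ((β i).num : ℚ) := by exact_mod_cast h1
    have h2 : ((β i).den : ℕ) * (N / (β i).den) = N := Nat.mul_div_cancel' hdvd
    have h3 : (β i) * ((β i).den : ℚ) = ((β i).num : ℚ) := Rat.mul_den_eq_num (β i)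
    calc (c i : ℚ) = ((β i).num : ℚ) * ((N / (β i).den : ℕ) : ℚ) := by
          rw [hcdef]; push_cast; rw [h1']
      _ = β i * ((β i).den : ℚ) * ((N / (β i).den : ℕ) : ℚ) := by rw [h3]
      _ = β i * ((((β i).den) * (N / (β i).den) : ℕ) : ℚ) := by push_cast; ring
      _ = β i * N := by rw [h2]
  have hsum : ∑ i, c i = N := by
    have h : ((∑ i, c i : ℕ) : ℚ) = N := by
      push_cast
      rw [Finset.sum_congr rfl fun i _ => hc i, ← Finset.sum_mul, hβsum, one_mul]
    exact_mod_cast h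
  have hcpos : ∀ i, 0 < c i := by
    intro i
    have h : (0 : ℚ) < c i := by
      rw [hc i]
      exact mul_pos (hβpos i) (by exact_mod_cast hNpos)
    exact_mod_cast h
  set c' : ℕ → ℕ := fun j => if h : j < m then c ⟨j, h⟩ else 0 with hc'def
  have hc'eq : ∀ i : Fin m, c' (i : ℕ) = c i := by
    intro i; simp [hc'def, i.isLt]
  have hTm : T c' m = N := by
    rw [T, ← Fin.sum_univ_eq_sum_range (fun j => c' j) m, ← hsum]
    exact Finset.sum_congr rfl fun i _ => hc'eq i
  have hTub : ∀ i : Fin m, T c' (i : ℕ) + c i ≤ N := by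
    intro i
    have h1 : T c' (i : ℕ) + c' (i : ℕ) ≤ T c' m := T_add_le c' i.isLt
    rw [hTm, hc'eq i] at h1
    exact h1
  set ω : ℕ → Fin m → ℕ :=
    fun k i => (k / N) * c i + min (c i) (k % N - T c' (i : ℕ)) with hωdef
  have hωval : ∀ k (i : Fin m),
      ω k i = (k / N) * c i + min (c i) (k % N - T c' (i : ℕ)) := fun _ _ => rfl
  refine ⟨ω, ?_, ?_, ?_⟩
  · intro i
    rw [hωval]
    simp [Nat.zero_div, Nat.zero_mod]
  · intro k
    have hr : k % N < N := Nat.mod_lt _ hNpos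
    obtain ⟨i0, hi0m, hi0le, hi0lt⟩ := T_exists c' m (k % N) (hTm ▸ hr)
    have hc'a : c' i0 = c ⟨i0, hi0m⟩ := by simp [hc'def, hi0m]
    rw [hc'a] at hi0lt
    have huniq : ∀ i : Fin m, i ≠ ⟨i0, hi0m⟩ →
        ¬ (T c' (i : ℕ) ≤ k % N ∧ k % N < T c' (i : ℕ) + c i) := by
      intro i hne hcon
      obtain ⟨h1, h2⟩ := hcon
      rcases Nat.lt_trichotomy (i : ℕ) i0 with h | h | h
      · have h3 := T_add_le c' h
        rw [hc'eq i] at h3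
        omega
      · exact hne (Fin.ext h)
      · have h3 := T_add_le c' (show i0 < (i : ℕ) from h)
        rw [hc'a] at h3
        omega
    have key : ∀ i : Fin m,
        ω (k + 1) i = ω k i + (if i = ⟨i0, hi0m⟩ then 1 else 0) := by
      intro i
      rw [hωval, hωval]
      by_cases hcase : k % N + 1 < N
      · have hdiv : (k + 1) / N = k / N ∧ (k + 1) % N = k % N + 1 := by
          refine (Nat.div_mod_unique hNpos).mpr ⟨?_, hcase⟩
          have := Nat.div_add_mod k N
          omega
        rw [hdiv.1, hdiv.2]
        by_cases hia : i = ⟨i0, hi0m⟩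
        · subst hia
          rw [if_pos rfl]
          simp only [Fin.val_mk]
          omega
        · rw [if_neg hia]
          have h4 := huniq i hia
          omega
      · have hcase' : k % N + 1 = N := by omega
        have hk1 : k + 1 = N * (k / N + 1) := by
          have h5 := Nat.div_add_mod k N
          have h6 : N * (k / N + 1) = N * (k / N) + N := by ring
          omega
        have hdiv1 : (k + 1) / N = k / N + 1 := by
          rw [hk1, Nat.mul_div_cancel_left _ hNpos]
        have hdiv2 : (k + 1) % N = 0 := by rw [hk1, Nat.mul_mod_right]
        rw [hdiv1, hdiv2]
        have hexp : (k / N + 1) * c i = (k / N) * c i + c i := by ring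
        have hub := hTub i
        by_cases hia : i = ⟨i0, hi0m⟩
        · subst hia
          rw [if_pos rfl]
          simp only [Fin.val_mk] at hexp hub ⊢
          omega
        · rw [if_neg hia]
          have h4 := huniq i hia
          omega
    refine ⟨⟨i0, hi0m⟩, ⟨?_, ?_⟩, ?_⟩
    · have h := key ⟨i0, hi0m⟩
      rw [if_pos rfl] at h
      exact h
    · intro i hia
      have h := key i
      rw [if_neg hia] at h
      omega
    · intro b hb
      by_contra hne
      have h1 := key b
      rw [if_neg hne] at h1
      omega
  · intro i
    refine ⟨(c i : ℝ), ?_⟩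
    intro k
    have hcR : (c i : ℝ) = (β i : ℝ) * N := by
      exact_mod_cast congrArg (fun q : ℚ => (q : ℝ)) (hc i)
    have hNR : (0 : ℝ) < N := by exact_mod_cast hNpos
    have hβR : (β i : ℝ) = (c i : ℝ) / N := by
      field_simp [hcR]; exact hcR.symm
    have hkv : N * (k / N) + k % N = k := Nat.div_add_mod k N
    have hrN : k % N < N := Nat.mod_lt _ hNpos
    rw [hωval, hβR]
    have hkR : (k : ℝ) = N * (k / N : ℕ) + (k % N : ℕ) := by exact_mod_cast hkv.symm
    rw [hkR]
    have hkey : (c i : ℝ) / N * ((N : ℝ) * (k / N : ℕ) + (k % N : ℕ)) =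
        ((k / N : ℕ) : ℝ) * c i + (c i : ℝ) * (k % N : ℕ) / N := by
      field_simp
    rw [hkey]
    push_cast
    have hmnR : (c i : ℝ) ⊓ ((k % N - T c' (i : ℕ) : ℕ) : ℝ) ≤ (c i : ℝ) :=
      min_le_left _ _
    have hmn0 : (0 : ℝ) ≤ (c i : ℝ) ⊓ ((k % N - T c' (i : ℕ) : ℕ) : ℝ) :=
      le_min (Nat.cast_nonneg _) (Nat.cast_nonneg _)
    have hfrac0 : (0 : ℝ) ≤ (c i : ℝ) * (k % N : ℕ) / N := by positivity
    have hfrac1 : (c i : ℝ) * (k % N : ℕ) / N ≤ (c i : ℝ) := by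
      rw [div_le_iff₀ hNR]
      have h7 : ((k % N : ℕ) : ℝ) ≤ (N : ℝ) := by exact_mod_cast hrN.le
      nlinarith [Nat.cast_nonneg (α := ℝ) (c i)]
    rw [abs_le]
    constructor <;> linarith
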